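/- Let P = C₃ × C₃ and let E be a subgroup of Aut(P) ≅ GL₂(𝔽₃) of order coprime to 3. If E has exactly 5 orbits on P, then E is cyclic of order 2 and its nontrivial element acts on P by inversion (i.e., fixed-point freely). -/

import Mathlib

/-- Let `P = C₃ × C₃` (written additively as `ZMod 3 × ZMod 3`) and let `E` be a subgroup
of `Aut(P)` of order coprime to `3`. If `E` has exactly `5` orbits on `P`, then `E` has
order `2` and its nontrivial element acts on `P` by inversion. -/
theorem stmt_18 (E : AddSubgroup (AddAut (ZMod 3 × ZMod 3)))
    (hcop : Nat.Coprime (Nat.card E) 3)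
    (horb : Nat.card (Quotient (AddAction.orbitRel E (ZMod 3 × ZMod 3))) = 5) :
    Nat.card E = 2 ∧
      ∀ e : E, (e : AddAut (ZMod 3 × ZMod 3)) ≠ 0 →
        ∀ g : ZMod 3 × ZMod 3, (e : AddAut (ZMod 3 × ZMod 3)) g = -g := by
  classical
  set X := ZMod 3 × ZMod 3 with hX
  haveI : Fintype E := Fintype.ofFinite E
  haveI : Fintype (Quotient (AddAction.orbitRel E X)) := Fintype.ofFinite _
  -- Burnside
  have burnside := AddAction.sum_card_fixedBy_eq_card_orbits_mul_card_addGroup E X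
  rw [Nat.card_eq_fintype_card] at horb
  -- fixed points of any g contain 0
  have hzero : ∀ g : E, (0 : X) ∈ AddAction.fixedBy X g := by
    intro g
    show g +ᵥ (0 : X) = 0
    show (g : AddAut X) (0 : X) = 0
    exact map_zero _
  have hpos : ∀ g : E, 1 ≤ Fintype.card (AddAction.fixedBy X g) := fun g =>
    Fintype.card_pos_iff.mpr ⟨⟨0, hzero g⟩⟩
  -- fixed points of a nontrivial g form a proper subgroup, so at most 3
  have hle3 : ∀ g : E, g ≠ 0 → Fintype.card (AddAction.fixedBy X g) ≤ 3 := by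
    intro g hg
    set S : AddSubgroup X :=
      { carrier := AddAction.fixedBy X g
        zero_mem' := hzero g
        add_mem' := by
          intro a b ha hb
          show (g : AddAut X) (a + b) = a + b
          rw [map_add]
          exact congrArg₂ (· + ·) ha hb
        neg_mem' := by
          intro a ha
          show (g : AddAut X) (-a) = -a
          rw [map_neg]
          exact congrArg Neg.neg ha } with hS
    have hdvd : Nat.card S ∣ Nat.card X := AddSubgroup.card_addSubgroup_dvd_card S
    have hcardX : Nat.card X = 9 := by
      rw [Nat.card_eq_fintype_card]; decide
    rw [hcardX] at hdvd
    have hne : Nat.card S ≠ 9 := by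
      intro h
      have htop : S = ⊤ := AddSubgroup.eq_top_of_card_eq S (by rw [h, hcardX])
      apply hg
      have : ∀ x : X, (g : AddAut X) x = x := by
        intro x
        have : x ∈ S := htop ▸ AddSubgroup.mem_top x
        exact this
      exact Subtype.ext (AddEquiv.ext this)
    have hmem : Nat.card S ∈ Nat.divisors 9 := Nat.mem_divisors.mpr ⟨hdvd, by norm_num⟩
    have hdiv : Nat.divisors 9 = {1, 3, 9} := by decide
    have hle : Nat.card S ≤ 3 := by
      rw [hdiv] at hmem
      rcases Finset.mem_insert.mp hmem with h | h
      · omega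
      rcases Finset.mem_insert.mp h with h | h
      · omega
      · rw [Finset.mem_singleton] at h; omega
    calc Fintype.card (AddAction.fixedBy X g)
        = Nat.card (AddAction.fixedBy X g) := Nat.card_eq_fintype_card.symm
      _ = Nat.card S := rfl
      _ ≤ 3 := hle
  -- rewrite burnside
  rw [horb] at burnside
  set n := Fintype.card E with hn
  -- sum over nontrivial elements
  have hsplit : ∑ a : E, Fintype.card (AddAction.fixedBy X a)
      = Fintype.card (AddAction.fixedBy X (0 : E))
        + ∑ a ∈ Finset.univ.erase (0 : E), Fintype.card (AddAction.fixedBy X a) := by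
    rw [← Finset.sum_erase_add _ _ (Finset.mem_univ (0 : E))]
    ring
  have hfix1 : Fintype.card (AddAction.fixedBy X (0 : E)) = 9 := by
    have : AddAction.fixedBy X (0 : E) = Set.univ := by
      ext x; simp [AddAction.fixedBy]
    calc Fintype.card (AddAction.fixedBy X (0 : E))
        = Fintype.card (Set.univ : Set X) := Fintype.card_congr (Equiv.setCongr this)
      _ = Fintype.card X := Fintype.card_congr (Equiv.Set.univ X)
      _ = 9 := by decide
  have hcarderase : (Finset.univ.erase (0 : E)).card = n - 1 := by
    rw [Finset.card_erase_of_mem (Finset.mem_univ _), Finset.card_univ]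
  have hub : ∑ a ∈ Finset.univ.erase (0 : E), Fintype.card (AddAction.fixedBy X a)
      ≤ 3 * (n - 1) := by
    calc _ ≤ ∑ _a ∈ Finset.univ.erase (0 : E), 3 :=
          Finset.sum_le_sum fun a ha => hle3 a (Finset.ne_of_mem_erase ha)
      _ = 3 * (n - 1) := by rw [Finset.sum_const, hcarderase]; ring
  have hlb : n - 1 ≤ ∑ a ∈ Finset.univ.erase (0 : E), Fintype.card (AddAction.fixedBy X a) := by
    calc n - 1 = ∑ _a ∈ Finset.univ.erase (0 : E), 1 := by
          rw [Finset.sum_const, hcarderase]; ring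
      _ ≤ _ := Finset.sum_le_sum fun a _ => hpos a
  have hn1 : 1 ≤ n := Fintype.card_pos
  rw [hsplit, hfix1] at burnside
  have hne3 : n ≠ 3 := by
    intro h
    rw [Nat.card_eq_fintype_card, ← hn, h] at hcop
    exact absurd hcop (by decide)
  have hn2 : n = 2 := by omega
  have hcardE : Nat.card E = 2 := by rw [Nat.card_eq_fintype_card, ← hn, hn2]
  refine ⟨hcardE, ?_⟩
  intro e he
  have heE : e ≠ 0 := fun h => he (by rw [h]; rfl)
  -- the erase set is exactly {e}
  have herase : Finset.univ.erase (0 : E) = {e} := by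
    apply Finset.eq_of_subset_of_card_le
    · have h1 : (Finset.univ.erase (0 : E)).card = 1 := by rw [hcarderase, hn2]
      obtain ⟨a, ha⟩ := Finset.card_eq_one.mp h1
      have he' : e ∈ Finset.univ.erase (0 : E) :=
        Finset.mem_erase.mpr ⟨heE, Finset.mem_univ e⟩
      rw [ha, Finset.mem_singleton] at he'
      rw [ha, he']
    · rw [hcarderase, hn2, Finset.card_singleton]
  have hfe : Fintype.card (AddAction.fixedBy X e) = 1 := by
    rw [herase, Finset.sum_singleton] at burnside
    omega
  -- fixed points of e are exactly {0}
  have honly : ∀ x : X, (e : AddAut X) x = x → x = 0 := by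
    intro x hx
    haveI := Fintype.card_le_one_iff_subsingleton.mp hfe.le
    have := @Subsingleton.elim (AddAction.fixedBy X e) _ ⟨x, hx⟩ ⟨0, hzero e⟩
    exact congrArg Subtype.val this
  -- e has order 2
  have hsq : e + e = 0 := by
    have h := card_nsmul_eq_zero' (G := E) (x := e)
    rwa [hcardE, two_nsmul] at h
  intro g
  have : (e : AddAut X) ((e : AddAut X) g + g) = (e : AddAut X) g + g := by
    rw [map_add]
    have : ((e : AddAut X) + (e : AddAut X)) g = g := by
      have : ((e + e : E) : AddAut X) = 0 := by rw [hsq]; rfl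
      calc ((e : AddAut X) + (e : AddAut X)) g = ((e + e : E) : AddAut X) g := rfl
        _ = g := by rw [this]; rfl
    rw [AddAut.add_apply] at this
    rw [this, add_comm]
  exact eq_neg_of_add_eq_zero_left (honly _ this)
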